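/- Let b0 : X → ℝ be nonnegative with Σ_{x∈X} b0(x) = 1, let h ∈ ℕ, and let d0 ∈ D. Then for every influence I: max_{a∈A} Σ_{x∈X} b0(x)·Q^I_h((x,d0),a) ≤ V̂^M, where V̂^M := max_{a∈A} Σ_{x∈X} b0(x)·Q̂_h(x,a). That is, the influence-optimistic Q-MMDP bound V̂^M upper-bounds the Q-MMDP value of the influence-augmented sub-problem for every influence I. -/

import Mathlib

open Finset

section QMMDP

variable {Xl Xn A U D : Type*}
  [Fintype Xl] [Nonempty Xl] [Fintype Xn] [Nonempty Xn]
  [Fintype A] [Nonempty A] [Fintype U] [Nonempty U] [Fintype D] [Nonempty D]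

/-- Influence-optimistic Q-MMDP values `Q̂_k(x,a)`. -/
noncomputable def Qhat (Pl : Xl → (Xl × Xn) → A → ℝ) (Pn : Xn → (Xl × Xn) → A → U → ℝ)
    (R : (Xl × Xn) → A → (Xl × Xn) → ℝ) :
    ℕ → (Xl × Xn) → A → ℝ
  | 0 => fun _ _ => 0
  | k + 1 => fun x a =>
      Finset.univ.sup' Finset.univ_nonempty (fun u : U =>
        ∑ x' : Xl × Xn, Pl x'.1 x a * Pn x'.2 x a u *
          (R x a x' +
            Finset.univ.sup' Finset.univ_nonempty (fun a' : A => Qhat Pl Pn R k x' a')))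

/-- Influence-induced Q-MMDP values `Q^I_k((x,d),a)` of the influence-augmented
sub-problem, for an influence `I`. -/
noncomputable def QI (Pl : Xl → (Xl × Xn) → A → ℝ) (Pn : Xn → (Xl × Xn) → A → U → ℝ)
    (δ : (Xl × Xn) → D → A → (Xl × Xn) → D) (R : (Xl × Xn) → A → (Xl × Xn) → ℝ)
    (I : D → U → ℝ) :
    ℕ → (Xl × Xn) → D → A → ℝ
  | 0 => fun _ _ _ => 0
  | k + 1 => fun x d a =>
      ∑ x' : Xl × Xn, Pl x'.1 x a * (∑ u : U, Pn x'.2 x a u * I d u) *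
        (R x a x' +
          Finset.univ.sup' Finset.univ_nonempty (fun a' : A =>
            QI Pl Pn δ R I k x' (δ x d a x') a'))

end QMMDP

section QMMDP

variable {Xl Xn A U D : Type*}
  [Fintype Xl] [Nonempty Xl] [Fintype Xn] [Nonempty Xn]
  [Fintype A] [Nonempty A] [Fintype U] [Nonempty U] [Fintype D] [Nonempty D]

lemma QI_le_Qhat
    (Pl : Xl → (Xl × Xn) → A → ℝ) (Pn : Xn → (Xl × Xn) → A → U → ℝ)
    (δ : (Xl × Xn) → D → A → (Xl × Xn) → D) (R : (Xl × Xn) → A → (Xl × Xn) → ℝ)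
    (hPl0 : ∀ x'l x a, 0 ≤ Pl x'l x a)
    (hPn0 : ∀ x'n x a u, 0 ≤ Pn x'n x a u)
    (I : D → U → ℝ) (hI0 : ∀ d u, 0 ≤ I d u) (hI1 : ∀ d, ∑ u : U, I d u = 1) :
    ∀ (k : ℕ) (x : Xl × Xn) (d : D) (a : A),
      QI Pl Pn δ R I k x d a ≤ Qhat Pl Pn R k x a := by
  intro k
  induction k with
  | zero => intro x d a; simp [QI, Qhat]
  | succ k ih =>
    intro x d a
    have key : QI Pl Pn δ R I (k + 1) x d a =
        ∑ u : U, I d u * ∑ x' : Xl × Xn, Pl x'.1 x a * Pn x'.2 x a u *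
          (R x a x' + Finset.univ.sup' Finset.univ_nonempty (fun a' : A =>
            QI Pl Pn δ R I k x' (δ x d a x') a')) := by
      rw [QI]
      simp only [Finset.mul_sum, Finset.sum_mul]
      rw [Finset.sum_comm]
      exact Finset.sum_congr rfl fun u _ => Finset.sum_congr rfl fun x' _ => by ring
    rw [key, Qhat]
    calc ∑ u : U, I d u * ∑ x' : Xl × Xn, Pl x'.1 x a * Pn x'.2 x a u *
            (R x a x' + Finset.univ.sup' Finset.univ_nonempty (fun a' : A =>
              QI Pl Pn δ R I k x' (δ x d a x') a'))
        ≤ ∑ u : U, I d u * (Finset.univ.sup' Finset.univ_nonempty (fun u : U =>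
            ∑ x' : Xl × Xn, Pl x'.1 x a * Pn x'.2 x a u *
              (R x a x' + Finset.univ.sup' Finset.univ_nonempty (fun a' : A =>
                Qhat Pl Pn R k x' a')))) := by
          apply Finset.sum_le_sum
          intro u _
          apply mul_le_mul_of_nonneg_left _ (hI0 d u)
          refine le_trans ?_ (Finset.le_sup' _ (Finset.mem_univ u))
          apply Finset.sum_le_sum
          intro x' _
          apply mul_le_mul_of_nonneg_left _
            (mul_nonneg (hPl0 _ _ _) (hPn0 _ _ _ _))
          apply add_le_add_right
          apply Finset.sup'_le
          intro a' _
          exact le_trans (ih x' (δ x d a x') a') (Finset.le_sup' _ (Finset.mem_univ a'))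
      _ = _ := by rw [← Finset.sum_mul, hI1, one_mul]

/-- the influence-optimistic Q-MMDP bound
`V̂^M = max_a ∑_x b0 x * Q̂_h x a` upper-bounds the Q-MMDP value of the
influence-augmented sub-problem for every influence `I`. -/
theorem IO_QMMDP_upper_bound
    (Pl : Xl → (Xl × Xn) → A → ℝ) (Pn : Xn → (Xl × Xn) → A → U → ℝ)
    (δ : (Xl × Xn) → D → A → (Xl × Xn) → D) (R : (Xl × Xn) → A → (Xl × Xn) → ℝ)
    (hPl0 : ∀ x'l x a, 0 ≤ Pl x'l x a) (hPl1 : ∀ x a, ∑ x'l : Xl, Pl x'l x a = 1)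
    (hPn0 : ∀ x'n x a u, 0 ≤ Pn x'n x a u) (hPn1 : ∀ x a u, ∑ x'n : Xn, Pn x'n x a u = 1)
    (b0 : Xl × Xn → ℝ) (hb00 : ∀ x, 0 ≤ b0 x) (hb01 : ∑ x : Xl × Xn, b0 x = 1)
    (h : ℕ) (d0 : D)
    (I : D → U → ℝ) (hI0 : ∀ d u, 0 ≤ I d u) (hI1 : ∀ d, ∑ u : U, I d u = 1) :
    Finset.univ.sup' Finset.univ_nonempty
        (fun a : A => ∑ x : Xl × Xn, b0 x * QI Pl Pn δ R I h x d0 a) ≤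
      Finset.univ.sup' Finset.univ_nonempty
        (fun a : A => ∑ x : Xl × Xn, b0 x * Qhat Pl Pn R h x a) := by
  apply Finset.sup'_le
  intro a _
  refine le_trans ?_ (Finset.le_sup' _ (Finset.mem_univ a))
  apply Finset.sum_le_sum
  intro x _
  exact mul_le_mul_of_nonneg_left (QI_le_Qhat Pl Pn δ R hPl0 hPn0 I hI0 hI1 h x d0 a)
    (hb00 x)

end QMMDP
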